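/- (Janssens' lemma) Let B be a POVM on a finite set Θ with values in positive semidefinite operators on a finite-dimensional Hilbert space H, and let u, v : Θ → ℝ. Write B(u) = Σ_θ u(θ) B_θ and Δ_B(u) = Σ_θ u(θ)² B_θ − B(u)². Then ‖Δ_B(u)‖^{1/2} · ‖Δ_B(v)‖^{1/2} ≥ (1/2)·‖[B(u), B(v)]‖, where ‖·‖ is the operator norm and [X,Y] = XY − YX. -/

import Mathlib

open scoped BigOperators
open Finset

section Aux
variable {E : Type*} [NormedAddCommGroup E] [InnerProductSpace ℂ E]

local notation "⟪" x ", " y "⟫" => @inner ℂ _ _ x y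

lemma psd_cs [CompleteSpace E] {T : E →L[ℂ] E} (hT : T.IsPositive) (a b : E) :
    ‖⟪a, T b⟫‖ ≤ Real.sqrt (Complex.re ⟪a, T a⟫) * Real.sqrt (Complex.re ⟪b, T b⟫) := by
  have hsym : ∀ x y : E, ⟪x, T y⟫ = starRingEnd ℂ ⟪y, T x⟫ := by
    intro x y
    rw [← inner_conj_symm]
    congr 1
    exact hT.isSymmetric y x
  set A := Complex.re ⟪a, T a⟫ with hA1
  set Bq := Complex.re ⟪b, T b⟫ with hB1
  have hA : 0 ≤ A := hT.re_inner_nonneg_right a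
  have hB : 0 ≤ Bq := hT.re_inner_nonneg_right b
  set z := ⟪a, T b⟫ with hz1
  by_cases hz : z = 0
  · rw [hz, norm_zero]; positivity
  · have hz' : (‖z‖ : ℂ) ≠ 0 := by
      simpa using norm_ne_zero_iff.mpr hz
    set c : ℂ := starRingEnd ℂ z / ‖z‖ with hc1
    have h5 : z * starRingEnd ℂ z = (‖z‖ : ℂ) * ‖z‖ := by
      rw [Complex.mul_conj']; ring
    have hcz : c * z = (‖z‖ : ℂ) := by
      rw [hc1, div_mul_eq_mul_div, mul_comm, h5, mul_div_assoc, div_self hz', mul_one]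
    have hcc : (starRingEnd ℂ c) * c = 1 := by
      have e : (starRingEnd ℂ c) * c = (z * starRingEnd ℂ z) / ((‖z‖ : ℂ) * ‖z‖) := by
        rw [hc1, map_div₀, Complex.conj_conj, Complex.conj_ofReal]
        ring
      rw [e, h5, div_self (mul_ne_zero hz' hz')]
    have hra : ⟪a, T a⟫ = (A : ℂ) := (Complex.conj_eq_iff_re.mp (hsym a a).symm).symm
    have hrb : ⟪b, T b⟫ = (Bq : ℂ) := (Complex.conj_eq_iff_re.mp (hsym b b).symm).symm
    have key : ∀ t : ℝ, 0 ≤ Bq * (t * t) + (2 * ‖z‖) * t + A := by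
      intro t
      have h0 := hT.re_inner_nonneg_right (a + ((t : ℂ) * c) • b)
      have e1 : ⟪a + ((t:ℂ)*c) • b, T (a + ((t:ℂ)*c) • b)⟫
          = ⟪a, T a⟫ + ((t:ℂ)*c) * ⟪a, T b⟫
            + (starRingEnd ℂ ((t:ℂ)*c)) * ⟪b, T a⟫
            + ((starRingEnd ℂ ((t:ℂ)*c)) * ((t:ℂ)*c)) * ⟪b, T b⟫ := by
        rw [map_add, map_smul]
        simp only [inner_add_left, inner_add_right, inner_smul_left, inner_smul_right]
        ring
      have e2 : ⟪a + ((t:ℂ)*c) • b, T (a + ((t:ℂ)*c) • b)⟫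
          = ((A + 2 * ‖z‖ * t + Bq * (t*t) : ℝ) : ℂ) := by
        rw [e1, hsym b a, ← hz1, hra, hrb]
        rw [map_mul, Complex.conj_ofReal]
        have h3 : (t:ℂ) * c * z = (t:ℂ) * (‖z‖:ℂ) := by rw [mul_assoc, hcz]
        have h6 : starRingEnd ℂ c * starRingEnd ℂ z = (‖z‖:ℂ) := by
          rw [← map_mul, hcz, Complex.conj_ofReal]
        push_cast
        linear_combination (t:ℂ) * hcz + (t:ℂ) * h6 + ((t:ℂ)*(t:ℂ)*(Bq:ℂ)) * hcc
      rw [e2] at h0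
      have h0' : (0:ℝ) ≤ A + 2 * ‖z‖ * t + Bq * (t*t) := by simpa using h0
      linarith
    have hd := discrim_le_zero key
    rw [discrim] at hd
    have hz2 : ‖z‖ ^ 2 ≤ A * Bq := by nlinarith
    rw [← Real.sqrt_mul hA]
    exact (Real.le_sqrt (norm_nonneg z) (by positivity)).mpr hz2

variable {Θ : Type*} [Fintype Θ]

lemma key_identity (B : Θ → (E →L[ℂ] E)) (hBsum : ∑ θ, B θ = 1)
    (w w' : Θ → ℝ) (φ ψ : E) :
    ∑ θ, ⟪(w θ : ℂ) • φ - (∑ θ', (w θ' : ℂ) • B θ') φ,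
        B θ ((w' θ : ℂ) • ψ - (∑ θ', (w' θ' : ℂ) • B θ') ψ)⟫
    = ⟪φ, (∑ θ, ((w θ * w' θ : ℝ) : ℂ) • B θ) ψ⟫
      - ⟪φ, (∑ θ', (w θ' : ℂ) • B θ') ((∑ θ', (w' θ' : ℂ) • B θ') ψ)⟫ := by
  have happ : ∀ (f : Θ → ℝ) (z : E),
      (∑ θ, (f θ : ℂ) • B θ) z = ∑ θ, (f θ : ℂ) • (B θ z) := by
    intro f z
    rw [ContinuousLinearMap.sum_apply]
    exact Finset.sum_congr rfl fun θ _ => rfl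
  have hinner : ∀ (f : Θ → ℝ) (x z : E),
      ⟪x, (∑ θ, (f θ : ℂ) • B θ) z⟫ = ∑ θ, (f θ : ℂ) * ⟪x, B θ z⟫ := by
    intro f x z
    rw [happ, inner_sum]
    exact Finset.sum_congr rfl fun θ _ => by rw [inner_smul_right]
  have hsum1 : ∀ z : E, ∑ θ, B θ z = z := by
    intro z
    rw [← ContinuousLinearMap.sum_apply, hBsum, ContinuousLinearMap.one_apply]
  set a : E := (∑ θ', (w θ' : ℂ) • B θ') φ with ha
  set b : E := (∑ θ', (w' θ' : ℂ) • B θ') ψ with hb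
  have step1 : ∑ θ, ⟪(w θ : ℂ) • φ - a, B θ ((w' θ : ℂ) • ψ - b)⟫
      = ∑ θ, ((w θ : ℂ) * (w' θ : ℂ) * ⟪φ, B θ ψ⟫ - (w θ : ℂ) * ⟪φ, B θ b⟫
          - (w' θ : ℂ) * ⟪a, B θ ψ⟫ + ⟪a, B θ b⟫) := by
    refine Finset.sum_congr rfl fun θ _ => ?_
    rw [map_sub, map_smul]
    simp only [inner_sub_left, inner_sub_right, inner_smul_left, inner_smul_right,
      Complex.conj_ofReal]
    ring
  rw [step1]
  rw [Finset.sum_add_distrib, Finset.sum_sub_distrib, Finset.sum_sub_distrib]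
  have p1 : ∑ θ, (w θ : ℂ) * (w' θ : ℂ) * ⟪φ, B θ ψ⟫
      = ⟪φ, (∑ θ, ((w θ * w' θ : ℝ) : ℂ) • B θ) ψ⟫ := by
    rw [hinner (fun θ => w θ * w' θ) φ ψ]
    refine Finset.sum_congr rfl fun θ _ => ?_
    push_cast
    ring
  have p2 : ∑ θ, (w θ : ℂ) * ⟪φ, B θ b⟫ = ⟪φ, (∑ θ', (w θ' : ℂ) • B θ') b⟫ :=
    (hinner w φ b).symm
  have p3 : ∑ θ, (w' θ : ℂ) * ⟪a, B θ ψ⟫ = ⟪a, b⟫ := by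
    rw [← hinner w' a ψ]
  have p4 : ∑ θ, ⟪a, B θ b⟫ = ⟪a, b⟫ := by
    rw [← inner_sum, hsum1]
  rw [p1, p2, p3, p4]
  ring

end Aux

section Aux2
variable {E : Type*} [NormedAddCommGroup E] [InnerProductSpace ℂ E]
variable {Θ : Type*} [Fintype Θ]

local notation "⟪" x ", " y "⟫" => @inner ℂ _ _ x y

lemma var_bound [CompleteSpace E] (B : Θ → (E →L[ℂ] E)) (hBsum : ∑ θ, B θ = 1)
    (w : Θ → ℝ) (ψ : E) :
    ∑ θ, Complex.re ⟪(w θ : ℂ) • ψ - (∑ θ', (w θ' : ℂ) • B θ') ψ,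
        B θ ((w θ : ℂ) • ψ - (∑ θ', (w θ' : ℂ) • B θ') ψ)⟫
      ≤ ‖∑ θ, ((w θ * w θ : ℝ) : ℂ) • B θ - (∑ θ', (w θ' : ℂ) • B θ')^2‖ * ‖ψ‖^2 := by
  set W := ∑ θ', (w θ' : ℂ) • B θ' with hW
  set D := ∑ θ, ((w θ * w θ : ℝ) : ℂ) • B θ - W^2 with hD
  have hid := key_identity B hBsum w w ψ ψ
  rw [← hW] at hid
  have hDψ : ⟪ψ, D ψ⟫ = ∑ θ, ⟪(w θ : ℂ) • ψ - W ψ, B θ ((w θ : ℂ) • ψ - W ψ)⟫ := by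
    rw [hid, hD]
    rw [ContinuousLinearMap.sub_apply, inner_sub_right, pow_two,
      ContinuousLinearMap.mul_apply]
  calc ∑ θ, Complex.re ⟪(w θ : ℂ) • ψ - W ψ, B θ ((w θ : ℂ) • ψ - W ψ)⟫
      = Complex.re ⟪ψ, D ψ⟫ := by rw [hDψ, Complex.re_sum]
    _ ≤ ‖⟪ψ, D ψ⟫‖ := by
        exact Complex.re_le_norm _
    _ ≤ ‖ψ‖ * ‖D ψ‖ := norm_inner_le_norm _ _
    _ ≤ ‖ψ‖ * (‖D‖ * ‖ψ‖) := by
        have h := D.le_opNorm ψ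
        have : (0:ℝ) ≤ ‖ψ‖ := norm_nonneg _
        nlinarith
    _ = ‖D‖ * ‖ψ‖^2 := by ring

lemma sum_bound [CompleteSpace E] (B : Θ → (E →L[ℂ] E))
    (hBpos : ∀ θ, (B θ).IsPositive) (hBsum : ∑ θ, B θ = 1)
    (w w' : Θ → ℝ) (φ ψ : E) :
    ‖∑ θ, ⟪(w θ : ℂ) • φ - (∑ θ', (w θ' : ℂ) • B θ') φ,
        B θ ((w' θ : ℂ) • ψ - (∑ θ', (w' θ' : ℂ) • B θ') ψ)⟫‖
      ≤ (Real.sqrt ‖∑ θ, ((w θ * w θ : ℝ) : ℂ) • B θ - (∑ θ', (w θ' : ℂ) • B θ')^2‖ * ‖φ‖)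
        * (Real.sqrt ‖∑ θ, ((w' θ * w' θ : ℝ) : ℂ) • B θ - (∑ θ', (w' θ' : ℂ) • B θ')^2‖ * ‖ψ‖) := by
  have hnn1 : ∀ θ : Θ, 0 ≤ Complex.re ⟪(w θ : ℂ) • φ - (∑ θ', (w θ' : ℂ) • B θ') φ,
      B θ ((w θ : ℂ) • φ - (∑ θ', (w θ' : ℂ) • B θ') φ)⟫ :=
    fun θ => (hBpos θ).re_inner_nonneg_right _
  have hnn2 : ∀ θ : Θ, 0 ≤ Complex.re ⟪(w' θ : ℂ) • ψ - (∑ θ', (w' θ' : ℂ) • B θ') ψ,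
      B θ ((w' θ : ℂ) • ψ - (∑ θ', (w' θ' : ℂ) • B θ') ψ)⟫ :=
    fun θ => (hBpos θ).re_inner_nonneg_right _
  calc ‖∑ θ, ⟪(w θ : ℂ) • φ - (∑ θ', (w θ' : ℂ) • B θ') φ,
        B θ ((w' θ : ℂ) • ψ - (∑ θ', (w' θ' : ℂ) • B θ') ψ)⟫‖
      ≤ ∑ θ, ‖⟪(w θ : ℂ) • φ - (∑ θ', (w θ' : ℂ) • B θ') φ,
          B θ ((w' θ : ℂ) • ψ - (∑ θ', (w' θ' : ℂ) • B θ') ψ)⟫‖ := norm_sum_le _ _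
    _ ≤ ∑ θ, Real.sqrt (Complex.re ⟪(w θ : ℂ) • φ - (∑ θ', (w θ' : ℂ) • B θ') φ,
            B θ ((w θ : ℂ) • φ - (∑ θ', (w θ' : ℂ) • B θ') φ)⟫)
          * Real.sqrt (Complex.re ⟪(w' θ : ℂ) • ψ - (∑ θ', (w' θ' : ℂ) • B θ') ψ,
            B θ ((w' θ : ℂ) • ψ - (∑ θ', (w' θ' : ℂ) • B θ') ψ)⟫) :=
        Finset.sum_le_sum fun θ _ => psd_cs (hBpos θ) _ _
    _ ≤ Real.sqrt (∑ θ, Complex.re ⟪(w θ : ℂ) • φ - (∑ θ', (w θ' : ℂ) • B θ') φ,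
            B θ ((w θ : ℂ) • φ - (∑ θ', (w θ' : ℂ) • B θ') φ)⟫)
          * Real.sqrt (∑ θ, Complex.re ⟪(w' θ : ℂ) • ψ - (∑ θ', (w' θ' : ℂ) • B θ') ψ,
            B θ ((w' θ : ℂ) • ψ - (∑ θ', (w' θ' : ℂ) • B θ') ψ)⟫) :=
        Real.sum_sqrt_mul_sqrt_le _ hnn1 hnn2
    _ ≤ Real.sqrt (‖∑ θ, ((w θ * w θ : ℝ) : ℂ) • B θ - (∑ θ', (w θ' : ℂ) • B θ')^2‖ * ‖φ‖^2)
          * Real.sqrt (‖∑ θ, ((w' θ * w' θ : ℝ) : ℂ) • B θ - (∑ θ', (w' θ' : ℂ) • B θ')^2‖ * ‖ψ‖^2) := by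
        have b1 := var_bound B hBsum w φ
        have b2 := var_bound B hBsum w' ψ
        exact mul_le_mul (Real.sqrt_le_sqrt b1) (Real.sqrt_le_sqrt b2)
          (Real.sqrt_nonneg _) (Real.sqrt_nonneg _)
    _ = (Real.sqrt ‖∑ θ, ((w θ * w θ : ℝ) : ℂ) • B θ - (∑ θ', (w θ' : ℂ) • B θ')^2‖ * ‖φ‖)
        * (Real.sqrt ‖∑ θ, ((w' θ * w' θ : ℝ) : ℂ) • B θ - (∑ θ', (w' θ' : ℂ) • B θ')^2‖ * ‖ψ‖) := by
        rw [Real.sqrt_mul (norm_nonneg _), Real.sqrt_mul (norm_nonneg _),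
          Real.sqrt_sq (norm_nonneg _), Real.sqrt_sq (norm_nonneg _)]

end Aux2

section Main
variable {E : Type*} [NormedAddCommGroup E] [InnerProductSpace ℂ E]
variable {Θ : Type*} [Fintype Θ]

local notation "⟪" x ", " y "⟫" => @inner ℂ _ _ x y

lemma main_aux [CompleteSpace E] (B : Θ → (E →L[ℂ] E))
    (hBpos : ∀ θ, (B θ).IsPositive) (hBsum : ∑ θ, B θ = 1)
    (u v : Θ → ℝ) :
    ‖(∑ θ, (u θ : ℂ) • B θ) * (∑ θ, (v θ : ℂ) • B θ)
        - (∑ θ, (v θ : ℂ) • B θ) * (∑ θ, (u θ : ℂ) • B θ)‖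
      ≤ 2 * (Real.sqrt ‖∑ θ, ((u θ * u θ : ℝ) : ℂ) • B θ - (∑ θ, (u θ : ℂ) • B θ)^2‖
          * Real.sqrt ‖∑ θ, ((v θ * v θ : ℝ) : ℂ) • B θ - (∑ θ, (v θ : ℂ) • B θ)^2‖) := by
  set X := ∑ θ, (u θ : ℂ) • B θ with hX
  set Y := ∑ θ, (v θ : ℂ) • B θ with hY
  set Ku := Real.sqrt ‖∑ θ, ((u θ * u θ : ℝ) : ℂ) • B θ - X^2‖ with hKu
  set Kv := Real.sqrt ‖∑ θ, ((v θ * v θ : ℝ) : ℂ) • B θ - Y^2‖ with hKv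
  have hKu0 : 0 ≤ Ku := Real.sqrt_nonneg _
  have hKv0 : 0 ≤ Kv := Real.sqrt_nonneg _
  have key : ∀ φ ψ : E, ‖⟪φ, (X*Y - Y*X) ψ⟫‖ ≤ (2*(Ku*Kv))*(‖φ‖*‖ψ‖) := by
    intro φ ψ
    have hS1 := key_identity B hBsum v u φ ψ
    have hS2 := key_identity B hBsum u v φ ψ
    have b1 := sum_bound B hBpos hBsum v u φ ψ
    have b2 := sum_bound B hBpos hBsum u v φ ψ
    rw [← hX, ← hY] at hS1 hS2 b1 b2
    rw [← hKu, ← hKv] at b1 b2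
    have hM : (∑ θ, ((v θ * u θ : ℝ) : ℂ) • B θ) = (∑ θ, ((u θ * v θ : ℝ) : ℂ) • B θ) :=
      Finset.sum_congr rfl fun θ _ => by rw [mul_comm]
    have e : ⟪φ, (X*Y - Y*X) ψ⟫ = ⟪φ, X (Y ψ)⟫ - ⟪φ, Y (X ψ)⟫ := by
      rw [ContinuousLinearMap.sub_apply, ContinuousLinearMap.mul_apply,
        ContinuousLinearMap.mul_apply, inner_sub_right]
    have hC : ⟪φ, (X*Y - Y*X) ψ⟫
        = (∑ θ, ⟪(v θ : ℂ) • φ - Y φ, B θ ((u θ : ℂ) • ψ - X ψ)⟫)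
          - (∑ θ, ⟪(u θ : ℂ) • φ - X φ, B θ ((v θ : ℂ) • ψ - Y ψ)⟫) := by
      rw [e, hS1, hS2, hM]
      ring
    calc ‖⟪φ, (X*Y - Y*X) ψ⟫‖
        = ‖(∑ θ, ⟪(v θ : ℂ) • φ - Y φ, B θ ((u θ : ℂ) • ψ - X ψ)⟫)
          - (∑ θ, ⟪(u θ : ℂ) • φ - X φ, B θ ((v θ : ℂ) • ψ - Y ψ)⟫)‖ := by rw [hC]
      _ ≤ ‖∑ θ, ⟪(v θ : ℂ) • φ - Y φ, B θ ((u θ : ℂ) • ψ - X ψ)⟫‖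
          + ‖∑ θ, ⟪(u θ : ℂ) • φ - X φ, B θ ((v θ : ℂ) • ψ - Y ψ)⟫‖ := norm_sub_le _ _
      _ ≤ (Kv * ‖φ‖) * (Ku * ‖ψ‖) + (Ku * ‖φ‖) * (Kv * ‖ψ‖) := add_le_add b1 b2
      _ = (2*(Ku*Kv))*(‖φ‖*‖ψ‖) := by ring
  have opb : ‖X*Y - Y*X‖ ≤ 2*(Ku*Kv) := by
    apply ContinuousLinearMap.opNorm_le_bound _ (by positivity)
    intro ψ
    by_cases hw : (X*Y - Y*X) ψ = 0
    · rw [hw, norm_zero]; positivity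
    · have hwpos : 0 < ‖(X*Y - Y*X) ψ‖ := norm_pos_iff.mpr hw
      have h1 := inner_self_eq_norm_sq (𝕜 := ℂ) ((X*Y - Y*X) ψ)
      have h2 := key ((X*Y - Y*X) ψ) ψ
      have h3 := RCLike.re_le_norm (⟪(X*Y - Y*X) ψ, (X*Y - Y*X) ψ⟫)
      have h4 : ‖(X*Y - Y*X) ψ‖ * ‖(X*Y - Y*X) ψ‖
          ≤ ((2*(Ku*Kv)) * ‖ψ‖) * ‖(X*Y - Y*X) ψ‖ := by nlinarith
      exact le_of_mul_le_mul_right h4 hwpos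
  linarith
end Main

open scoped BigOperators in
/-- Janssens' lemma: for a POVM `B` on a finite set and real functions `u, v`,
`‖Δ_B(u)‖^{1/2} ⬝ ‖Δ_B(v)‖^{1/2} ≥ (1/2)‖[B(u),B(v)]‖`. -/
theorem stmt_5 {E : Type*} [NormedAddCommGroup E] [InnerProductSpace ℂ E]
    [FiniteDimensional ℂ E]
    {Θ : Type*} [Fintype Θ] (B : Θ → (E →L[ℂ] E))
    (hBpos : ∀ θ, (B θ).IsPositive)
    (hBsum : ∑ θ, B θ = 1)
    (u v : Θ → ℝ) :
    (1 / 2 : ℝ) * ‖(∑ θ, (u θ : ℂ) • B θ) * (∑ θ, (v θ : ℂ) • B θ)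
        - (∑ θ, (v θ : ℂ) • B θ) * (∑ θ, (u θ : ℂ) • B θ)‖
      ≤ Real.sqrt ‖∑ θ, ((u θ)^2 : ℂ) • B θ - (∑ θ, (u θ : ℂ) • B θ)^2‖
        * Real.sqrt ‖∑ θ, ((v θ)^2 : ℂ) • B θ - (∑ θ, (v θ : ℂ) • B θ)^2‖ := by
  have hcast : ∀ (w : Θ → ℝ),
      (∑ θ, ((w θ)^2 : ℂ) • B θ) = ∑ θ, ((w θ * w θ : ℝ) : ℂ) • B θ :=
    fun w => Finset.sum_congr rfl fun θ _ => by norm_cast; rw [pow_two]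
  rw [hcast u, hcast v]
  have h := main_aux B hBpos hBsum u v
  nlinarith [Real.sqrt_nonneg ‖∑ θ, ((u θ * u θ : ℝ) : ℂ) • B θ - (∑ θ, (u θ : ℂ) • B θ)^2‖,
    Real.sqrt_nonneg ‖∑ θ, ((v θ * v θ : ℝ) : ℂ) • B θ - (∑ θ, (v θ : ℂ) • B θ)^2‖]
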